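/- arXiv:2509.22337 — 4 statements merged into one kernel-verified Lean document; each statement's English description precedes it below -/
import Mathlib

section
/- Let E be a finite set with a strict partial order ≺ and N : E → Set E an arbitrary neighborhood function. Suppose a list e₁, …, e_N is a topological linearization of (E, ≺) (i.e., e_i ≺ e_j implies i < j), and the list is greedily partitioned into consecutive blocks s₁, …, s_k such that a new block is started at e_i exactly when some element e already in the current block satisfies e ∈ N(e_i) and e ≺ e_i. Then for every block s_j, every e ∈ s_j, and every e' ∈ N(e) with e' ≺ e, we have e' ∈ s₁ ∪ … ∪ s_{j−1}. -/
/-- Correctness of the dependency-analysis algorithm: for a topological linearization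
of a finite strict partial order, greedily partitioned into consecutive blocks (a new
block starts exactly when a within-block dependency would be created), every dependency
of an element lies in a strictly earlier block. -/
theorem stmt_1 {E : Type*} [Fintype E] (prec : E → E → Prop)
    (hirr : ∀ e, ¬ prec e e)
    (htrans : ∀ a b c, prec a b → prec b c → prec a c)
    (Nbr : E → Set E) (N : ℕ) (e : Fin N → E)
    (hbij : Function.Bijective e)
    (htopo : ∀ i j : Fin N, prec (e i) (e j) → i < j)
    (blk : Fin N → ℕ) (hmono : Monotone blk)
    (hgreedy : ∀ i j : Fin N, j < i → blk j = blk i →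
      ¬ (e j ∈ Nbr (e i) ∧ prec (e j) (e i))) :
    ∀ i : Fin N, ∀ e' ∈ Nbr (e i), prec e' (e i) →
      ∃ j : Fin N, e j = e' ∧ blk j < blk i := by
  intro i e' hN hp
  obtain ⟨j, rfl⟩ := hbij.2 e'
  have hj : j < i := htopo j i hp
  refine ⟨j, rfl, ?_⟩
  rcases lt_or_eq_of_le (hmono hj.le) with h | h
  · exact h
  · exact absurd ⟨hN, hp⟩ (hgreedy i j hj h)
end

section
/- Let μ₀, μ₁, …, μ_n : {0,1} → ℝ≥0 be messages and p₁, p₂ ∈ [0,1]. Define the AND factor f(x₀, x₁, …, x_n) to equal p₁ if all x_i = 1 for i ≥ 1 and x₀ = 1; 1−p₁ if all x_i = 1 and x₀ = 0; p₂ if some x_i = 0 (i ≥ 1) and x₀ = 1; and 1−p₂ if some x_i = 0 and x₀ = 0. Then the sum-product message to the head variable satisfies ∑_{x₁,…,x_n} f(1, x₁,…,x_n) ∏_{i=1}^n μ_i(x_i) = p₂ ∏_{i=1}^n (μ_i(0) + μ_i(1)) + (p₁ − p₂) ∏_{i=1}^n μ_i(1). -/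
open Finset in
/-- Closed form of the sum-product message from an AND factor to its head variable at value 1. -/
theorem stmt_3 (n : ℕ) (hn : 1 ≤ n) (p₁ p₂ : ℝ)
    (hp₁ : 0 ≤ p₁ ∧ p₁ ≤ 1) (hp₂ : 0 ≤ p₂ ∧ p₂ ≤ 1)
    (μ : Fin n → Bool → ℝ) (hμ : ∀ i b, 0 ≤ μ i b)
    (f : Bool → (Fin n → Bool) → ℝ)
    (hf : ∀ x₀ x, f x₀ x =
      if (∀ i, x i = true) then (if x₀ then p₁ else 1 - p₁)
      else (if x₀ then p₂ else 1 - p₂)) :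
    ∑ x : Fin n → Bool, f true x * ∏ i, μ i (x i) =
      p₂ * ∏ i, (μ i false + μ i true) + (p₁ - p₂) * ∏ i, μ i true := by
  have h1 : ∀ x : Fin n → Bool, f true x * ∏ i, μ i (x i) =
      p₂ * ∏ i, μ i (x i) +
        (if (∀ i, x i = true) then (p₁ - p₂) * ∏ i, μ i (x i) else 0) := by
    intro x
    rw [hf]
    by_cases h : ∀ i, x i = true <;> simp [h] <;> ring
  simp only [h1, Finset.sum_add_distrib, ← Finset.mul_sum]
  have hsum : ∑ x : Fin n → Bool, ∏ i, μ i (x i) = ∏ i, (μ i false + μ i true) := by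
    rw [← Fintype.piFinset_univ, ← Finset.prod_univ_sum]
    simp [add_comm]
  have hsingle : (∑ x : Fin n → Bool,
      (if (∀ i, x i = true) then (p₁ - p₂) * ∏ i, μ i (x i) else 0)) =
      (p₁ - p₂) * ∏ i, μ i true := by
    rw [Finset.sum_eq_single (fun _ => true)]
    · simp
    · intro b _ hb
      rw [if_neg]
      intro h
      exact hb (funext h)
    · simp
  rw [hsum, hsingle]
end

section
/- With the AND factor f and messages μ₀, μ₁, …, μ_n : {0,1} → ℝ≥0, for any fixed body index j ∈ {1,…,n}, the message to variable v_j at value 1 satisfies ∑_{x₀} ∑_{x_i, i≠j, i≥1} f(x₀, x₁,…,x_{j−1},1,x_{j+1},…,x_n) ∏_{i≠j, i≥0} μ_i(x_i) = ((1−p₂)μ₀(0) + p₂ μ₀(1)) ∏_{i≥1, i≠j} (μ_i(0)+μ_i(1)) + (p₂−p₁)(μ₀(0) − μ₀(1)) ∏_{i≥1, i≠j} μ_i(1). -/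
lemma and_msg_full {n : ℕ} (h : Fin n → Bool → ℝ) :
    ∑ x : Fin n → Bool, ∏ i, h i (x i) = ∏ i, (h i false + h i true) := by
  have : ∀ i : Fin n, h i false + h i true = ∑ b : Bool, h i b := by
    intro i; simp [add_comm]
  simp_rw [this, Finset.prod_univ_sum, Fintype.piFinset_univ]

lemma and_msg_keyS {n : ℕ} (j : Fin n) (g : Fin n → Bool → ℝ) :
    ∑ x ∈ Finset.univ.filter (fun x : Fin n → Bool => x j = true),
        ∏ i ∈ Finset.univ.erase j, g i (x i)
      = ∏ i ∈ Finset.univ.erase j, (g i false + g i true) := by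
  have key := and_msg_full (fun i b => if i = j then (if b then (1:ℝ) else 0) else g i b)
  rw [Finset.sum_filter]
  have e1 : ∀ x : Fin n → Bool,
      (if x j = true then ∏ i ∈ Finset.univ.erase j, g i (x i) else 0)
        = ∏ i, (if i = j then (if x i then (1:ℝ) else 0) else g i (x i)) := by
    intro x
    have hP : ∏ i ∈ Finset.univ.erase j, (if i = j then (if x i then (1:ℝ) else 0) else g i (x i))
        = ∏ i ∈ Finset.univ.erase j, g i (x i) :=
      Finset.prod_congr rfl fun i hi => if_neg (Finset.ne_of_mem_erase hi)
    rw [← Finset.mul_prod_erase Finset.univ _ (Finset.mem_univ j), hP]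
    cases hx : x j <;> simp [hx]
  simp_rw [e1]
  rw [key, ← Finset.mul_prod_erase Finset.univ _ (Finset.mem_univ j)]
  have hP : ∏ i ∈ Finset.univ.erase j,
      ((if i = j then (if (false:Bool) then (1:ℝ) else 0) else g i false) +
        (if i = j then (if (true:Bool) then (1:ℝ) else 0) else g i true))
      = ∏ i ∈ Finset.univ.erase j, (g i false + g i true) :=
    Finset.prod_congr rfl fun i hi => by
      rw [if_neg (Finset.ne_of_mem_erase hi), if_neg (Finset.ne_of_mem_erase hi)]
  rw [hP]
  simp

open Finset in
/-- Closed form of the sum-product message from an AND factor to a body variable v_j at value 1. -/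
theorem stmt_5 (n : ℕ) (hn : 1 ≤ n) (j : Fin n) (p₁ p₂ : ℝ)
    (hp₁ : 0 ≤ p₁ ∧ p₁ ≤ 1) (hp₂ : 0 ≤ p₂ ∧ p₂ ≤ 1)
    (μ₀ : Bool → ℝ) (μ : Fin n → Bool → ℝ)
    (hμ₀ : ∀ b, 0 ≤ μ₀ b) (hμ : ∀ i b, 0 ≤ μ i b)
    (f : Bool → (Fin n → Bool) → ℝ)
    (hf : ∀ x₀ x, f x₀ x =
      if (∀ i, x i = true) then (if x₀ then p₁ else 1 - p₁)
      else (if x₀ then p₂ else 1 - p₂)) :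
    ∑ x₀ : Bool, ∑ x ∈ Finset.univ.filter (fun x : Fin n → Bool => x j = true),
        f x₀ x * (μ₀ x₀ * ∏ i ∈ Finset.univ.erase j, μ i (x i)) =
      ((1 - p₂) * μ₀ false + p₂ * μ₀ true) *
          ∏ i ∈ Finset.univ.erase j, (μ i false + μ i true) +
        (p₂ - p₁) * (μ₀ false - μ₀ true) * ∏ i ∈ Finset.univ.erase j, μ i true := by
  have hper : ∀ (c₁ c₂ : ℝ),
      ∑ x ∈ Finset.univ.filter (fun x : Fin n → Bool => x j = true),
        (if (∀ i, x i = true) then c₁ else c₂) * ∏ i ∈ Finset.univ.erase j, μ i (x i)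
      = c₂ * ∏ i ∈ Finset.univ.erase j, (μ i false + μ i true)
        + (c₁ - c₂) * ∏ i ∈ Finset.univ.erase j, μ i true := by
    intro c₁ c₂
    have e : ∀ x ∈ Finset.univ.filter (fun x : Fin n → Bool => x j = true),
        (if (∀ i, x i = true) then c₁ else c₂) * ∏ i ∈ Finset.univ.erase j, μ i (x i)
        = c₂ * ∏ i ∈ Finset.univ.erase j, μ i (x i)
          + (c₁ - c₂) * ∏ i ∈ Finset.univ.erase j, (if x i then μ i true else 0) := by
      intro x hx
      simp only [Finset.mem_filter] at hx
      by_cases hall : ∀ i, x i = true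
      · rw [if_pos hall]
        have h1 : ∏ i ∈ Finset.univ.erase j, μ i (x i)
            = ∏ i ∈ Finset.univ.erase j, μ i true :=
          Finset.prod_congr rfl fun i _ => by rw [hall i]
        have h2 : ∏ i ∈ Finset.univ.erase j, (if x i then μ i true else 0)
            = ∏ i ∈ Finset.univ.erase j, μ i true :=
          Finset.prod_congr rfl fun i _ => by simp [hall i]
        rw [h1, h2]; ring
      · rw [if_neg hall]
        push_neg at hall
        obtain ⟨i, hi⟩ := hall
        have hij : i ≠ j := fun h => hi (h ▸ hx.2)
        have hz : ∏ i ∈ Finset.univ.erase j, (if x i then μ i true else 0) = 0 :=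
          Finset.prod_eq_zero (Finset.mem_erase.mpr ⟨hij, Finset.mem_univ i⟩) (if_neg hi)
        rw [hz]; ring
    rw [Finset.sum_congr rfl e, Finset.sum_add_distrib, ← Finset.mul_sum, ← Finset.mul_sum,
      and_msg_keyS j μ, and_msg_keyS j (fun i b => if b then μ i true else 0)]
    simp
  have main : ∀ x₀ : Bool,
      ∑ x ∈ Finset.univ.filter (fun x : Fin n → Bool => x j = true),
        f x₀ x * (μ₀ x₀ * ∏ i ∈ Finset.univ.erase j, μ i (x i))
      = μ₀ x₀ * ((if x₀ then p₂ else 1 - p₂) * ∏ i ∈ Finset.univ.erase j, (μ i false + μ i true)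
          + ((if x₀ then p₁ else 1 - p₁) - (if x₀ then p₂ else 1 - p₂))
            * ∏ i ∈ Finset.univ.erase j, μ i true) := by
    intro x₀
    rw [← hper (if x₀ then p₁ else 1 - p₁) (if x₀ then p₂ else 1 - p₂), Finset.mul_sum]
    exact Finset.sum_congr rfl fun x _ => by rw [hf]; ring
  rw [Fintype.sum_bool, main true, main false]
  simp only [if_true, Bool.false_eq_true, if_false]
  ring
end

section
/- With the AND factor f and messages μ₀, μ₁, …, μ_n : {0,1} → ℝ≥0, for any fixed body index j, the message to variable v_j at value 0 satisfies ∑_{x₀} ∑_{x_i, i≠j, i≥1} f(x₀, x₁,…,x_{j−1},0,x_{j+1},…,x_n) ∏_{i≠j, i≥0} μ_i(x_i) = ((1−p₂)μ₀(0) + p₂ μ₀(1)) ∏_{i≥1, i≠j} (μ_i(0)+μ_i(1)). -/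
open Finset in
lemma aux_sum_prod (n : ℕ) (j : Fin n) (μ : Fin n → Bool → ℝ) :
    ∑ x ∈ Finset.univ.filter (fun x : Fin n → Bool => x j = false),
        ∏ i ∈ Finset.univ.erase j, μ i (x i) =
      ∏ i ∈ Finset.univ.erase j, (μ i false + μ i true) := by
  classical
  set g : Fin n → Bool → ℝ := fun i b =>
    if i = j then (if b = false then 1 else 0) else μ i b with hg
  have h1 : ∑ x : Fin n → Bool, ∏ i, g i (x i) = ∏ i, ∑ b, g i b :=
    (Fintype.prod_sum g).symm
  have h2 : ∏ i, ∑ b : Bool, g i b = ∏ i ∈ Finset.univ.erase j, (μ i false + μ i true) := by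
    rw [← Finset.prod_erase_mul _ _ (Finset.mem_univ j)]
    simp [hg]
    exact Finset.prod_congr rfl fun i hi => by
      simp [Finset.mem_erase] at hi; simp [hi, add_comm]
  have h3 : ∀ x : Fin n → Bool, ∏ i, g i (x i) =
      (if x j = false then 1 else 0) * ∏ i ∈ Finset.univ.erase j, μ i (x i) := by
    intro x
    rw [← Finset.prod_erase_mul _ _ (Finset.mem_univ j), mul_comm]
    congr 1
    · simp [hg]
    · exact Finset.prod_congr rfl fun i hi => by
        simp [Finset.mem_erase] at hi; simp [hg, hi]
  rw [← h2, ← h1, Finset.sum_congr rfl (fun x _ => h3 x)]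
  simp only [ite_mul, one_mul, zero_mul]
  rw [Finset.sum_filter]

open Finset in
/-- Closed form of the sum-product message from an AND factor to a body variable v_j at value 0. -/
theorem stmt_6 (n : ℕ) (hn : 1 ≤ n) (j : Fin n) (p₁ p₂ : ℝ)
    (hp₁ : 0 ≤ p₁ ∧ p₁ ≤ 1) (hp₂ : 0 ≤ p₂ ∧ p₂ ≤ 1)
    (μ₀ : Bool → ℝ) (μ : Fin n → Bool → ℝ)
    (hμ₀ : ∀ b, 0 ≤ μ₀ b) (hμ : ∀ i b, 0 ≤ μ i b)
    (f : Bool → (Fin n → Bool) → ℝ)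
    (hf : ∀ x₀ x, f x₀ x =
      if (∀ i, x i = true) then (if x₀ then p₁ else 1 - p₁)
      else (if x₀ then p₂ else 1 - p₂)) :
    ∑ x₀ : Bool, ∑ x ∈ Finset.univ.filter (fun x : Fin n → Bool => x j = false),
        f x₀ x * (μ₀ x₀ * ∏ i ∈ Finset.univ.erase j, μ i (x i)) =
      ((1 - p₂) * μ₀ false + p₂ * μ₀ true) *
        ∏ i ∈ Finset.univ.erase j, (μ i false + μ i true) := by
  classical
  have hf' : ∀ (x₀ : Bool) (x : Fin n → Bool), x j = false →
      f x₀ x = if x₀ then p₂ else 1 - p₂ := by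
    intro x₀ x hx
    rw [hf]
    have : ¬ ∀ i, x i = true := fun h => by simp [h j] at hx
    simp [this]
  have key : ∀ x₀ : Bool,
      ∑ x ∈ Finset.univ.filter (fun x : Fin n → Bool => x j = false),
        f x₀ x * (μ₀ x₀ * ∏ i ∈ Finset.univ.erase j, μ i (x i)) =
      (if x₀ then p₂ else 1 - p₂) * μ₀ x₀ *
        ∏ i ∈ Finset.univ.erase j, (μ i false + μ i true) := by
    intro x₀
    rw [← aux_sum_prod n j μ, Finset.mul_sum]
    refine Finset.sum_congr rfl fun x hx => ?_
    simp only [Finset.mem_filter] at hx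
    rw [hf' x₀ x hx.2]
    ring
  rw [Fintype.sum_bool, key, key]
  simp
  ring
end
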